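/- Let p = (p_1, ..., p_k) be a probability vector and α ∈ [0,1]^k with Z := sum_i p_i α_i > 0. Then sum_{i≠j} p_i α_i p_j α_j / Z ≤ sum_{i≠j} p_i p_j / 1 whenever α is replaced coordinatewise by the all-ones vector; that is, (Z^2 − sum_i (p_i α_i)^2)/Z ≤ 1 − sum_i p_i^2. -/
import Mathlib


/-- For a probability vector `p` and `α ∈ [0,1]^k` with `Z = ∑ pᵢαᵢ > 0`:
`(Z² - ∑ (pᵢαᵢ)²)/Z ≤ 1 - ∑ pᵢ²`, i.e. the conditional marginal benefit at `α`
is at most its value at `α = 1`. -/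
theorem stmt17 (k : ℕ) (p α : Fin k → ℝ)
    (hp : ∀ i, 0 ≤ p i) (hsum : ∑ i, p i = 1)
    (hα : ∀ i, 0 ≤ α i ∧ α i ≤ 1) (hZ : 0 < ∑ i, p i * α i) :
    ((∑ i, p i * α i) ^ 2 - ∑ i, (p i * α i) ^ 2) / (∑ i, p i * α i)
      ≤ 1 - ∑ i, (p i) ^ 2 := by
  set x : Fin k → ℝ := fun i => p i * α i with hx
  set S : ℝ := ∑ i, x i with hS
  set X2 : ℝ := ∑ i, (x i) ^ 2 with hX2
  set P2 : ℝ := ∑ i, (p i) ^ 2 with hP2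
  have hxle : ∀ i, x i ≤ p i := fun i => by
    show p i * α i ≤ p i
    have := (hα i).2; have := hp i; nlinarith
  have hxnn : ∀ i, 0 ≤ x i := fun i => mul_nonneg (hp i) (hα i).1
  rw [div_le_iff₀ hZ]
  -- key identity
  have hid : S * (1 - P2) - (S ^ 2 - X2)
      = ∑ i, (p i - x i) * (S * (1 - p i - x i) + X2) := by
    have expand : ∀ i, (p i - x i) * (S * (1 - p i - x i) + X2)
        = S * p i - S * x i - S * (p i) ^ 2 + S * (x i) ^ 2
          + X2 * p i - X2 * x i := by intro i; ring
    rw [Finset.sum_congr rfl fun i _ => expand i]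
    simp only [Finset.sum_add_distrib, Finset.sum_sub_distrib, ← Finset.mul_sum]
    rw [hsum, ← hS, ← hX2, ← hP2]
    ring
  -- each term is nonnegative
  have hterm : ∀ i ∈ Finset.univ, (0:ℝ) ≤ (p i - x i) * (S * (1 - p i - x i) + X2) := by
    intro i _
    have h1 : p i - x i ≤ ∑ j, (p j - x j) := by
      apply Finset.single_le_sum (f := fun j => p j - x j)
        (fun j _ => sub_nonneg.mpr (hxle j)) (Finset.mem_univ i)
    have h2 : ∑ j, (p j - x j) = 1 - S := by
      rw [Finset.sum_sub_distrib, hsum, ← hS]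
    have h3 : S - x i ≤ 1 - p i := by linarith [h1, h2.symm ▸ h1]
    have h4 : (x i) ^ 2 ≤ X2 := by
      apply Finset.single_le_sum (f := fun j => (x j) ^ 2)
        (fun j _ => sq_nonneg _) (Finset.mem_univ i)
    have h5 : 0 ≤ S * (1 - p i - x i) + X2 := by nlinarith [sq_nonneg (S - x i)]
    exact mul_nonneg (sub_nonneg.mpr (hxle i)) h5
  have := Finset.sum_nonneg hterm
  nlinarith [hid, this]
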